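/- Let (g_n) be a finite family of vectors and h a vector in a Hilbert space H, and let w_j, z_{nj} ∈ B(H) be finite families. Then |∑_n ⟨(∑_j z_{nj} w_j) g_n, h⟩| ≤ ‖∑_j w_j* w_j‖^(1/2) · (∑_n ‖g_n‖²)^(1/2) · ‖∑_{n,j} z_{nj} z_{nj}*‖^(1/2) · ‖h‖. -/

import Mathlib

open scoped BigOperators InnerProductSpace

theorem aux_sum_opnorm {H : Type*} [NormedAddCommGroup H] [InnerProductSpace ℂ H] [CompleteSpace H]
    {ι : Type*} (s : Finset ι) (T : ι → H →L[ℂ] H) (x : H) :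
    ∑ i ∈ s, ‖T i x‖ ^ 2 ≤ ‖∑ i ∈ s, ContinuousLinearMap.adjoint (T i) * T i‖ * ‖x‖ ^ 2 := by
  have h1 : (∑ i ∈ s, ‖T i x‖ ^ 2 : ℝ)
      = Complex.re ⟪(∑ i ∈ s, ContinuousLinearMap.adjoint (T i) * T i) x, x⟫_ℂ := by
    simp only [ContinuousLinearMap.sum_apply, sum_inner, ContinuousLinearMap.mul_apply,
      ContinuousLinearMap.adjoint_inner_left, Complex.re_sum]
    exact Finset.sum_congr rfl fun i _ => by rw [← @inner_self_eq_norm_sq ℂ]; rfl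
  rw [h1]
  calc Complex.re ⟪(∑ i ∈ s, ContinuousLinearMap.adjoint (T i) * T i) x, x⟫_ℂ
      ≤ ‖⟪(∑ i ∈ s, ContinuousLinearMap.adjoint (T i) * T i) x, x⟫_ℂ‖ := Complex.re_le_norm _
    _ ≤ ‖(∑ i ∈ s, ContinuousLinearMap.adjoint (T i) * T i) x‖ * ‖x‖ := norm_inner_le_norm _ _
    _ ≤ (‖∑ i ∈ s, ContinuousLinearMap.adjoint (T i) * T i‖ * ‖x‖) * ‖x‖ := by
        gcongr; exact (∑ i ∈ s, ContinuousLinearMap.adjoint (T i) * T i).le_opNorm x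
    _ = ‖∑ i ∈ s, ContinuousLinearMap.adjoint (T i) * T i‖ * ‖x‖ ^ 2 := by ring


/-- For finite families of vectors `g_n`, a vector `h`, and operators
`w_j, z_{nj} ∈ B(H)`:
`|∑_n ⟨(∑_j z_{nj} w_j) g_n, h⟩| ≤ ‖∑_j w_j* w_j‖^(1/2) (∑_n ‖g_n‖²)^(1/2)
  ‖∑_{n,j} z_{nj} z_{nj}*‖^(1/2) ‖h‖`. -/
theorem abs_sum_inner_le {H : Type*} [NormedAddCommGroup H]
    [InnerProductSpace ℂ H] [CompleteSpace H] {N J : ℕ}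
    (g : Fin N → H) (h : H)
    (z : Fin N → Fin J → H →L[ℂ] H) (w : Fin J → H →L[ℂ] H) :
    ‖∑ n, ⟪(∑ j, z n j * w j) (g n), h⟫_ℂ‖ ≤
      Real.sqrt ‖∑ j, ContinuousLinearMap.adjoint (w j) * w j‖ *
        Real.sqrt (∑ n, ‖g n‖ ^ 2) *
        Real.sqrt ‖∑ n, ∑ j, z n j * ContinuousLinearMap.adjoint (z n j)‖ * ‖h‖ := by
  set u : Fin N × Fin J → H := fun p => w p.2 (g p.1)
  set v : Fin N × Fin J → H := fun p => ContinuousLinearMap.adjoint (z p.1 p.2) h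
  -- rewrite LHS
  have hLHS : (∑ n, ⟪(∑ j, z n j * w j) (g n), h⟫_ℂ)
      = ∑ p : Fin N × Fin J, ⟪u p, v p⟫_ℂ := by
    rw [Fintype.sum_prod_type]
    refine Finset.sum_congr rfl fun n _ => ?_
    simp only [ContinuousLinearMap.sum_apply, sum_inner, ContinuousLinearMap.mul_apply, u, v,
      ContinuousLinearMap.adjoint_inner_right]
  have hA : ∑ p : Fin N × Fin J, ‖u p‖ ^ 2
      ≤ ‖∑ j, ContinuousLinearMap.adjoint (w j) * w j‖ * ∑ n, ‖g n‖ ^ 2 := by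
    rw [Fintype.sum_prod_type, Finset.mul_sum]
    exact Finset.sum_le_sum fun n _ => aux_sum_opnorm Finset.univ w (g n)
  have hB : ∑ p : Fin N × Fin J, ‖v p‖ ^ 2
      ≤ ‖∑ n, ∑ j, z n j * ContinuousLinearMap.adjoint (z n j)‖ * ‖h‖ ^ 2 := by
    have := aux_sum_opnorm (Finset.univ : Finset (Fin N × Fin J))
      (fun p => ContinuousLinearMap.adjoint (z p.1 p.2)) h
    simpa [ContinuousLinearMap.adjoint_adjoint, Fintype.sum_prod_type] using this
  calc ‖∑ n, ⟪(∑ j, z n j * w j) (g n), h⟫_ℂ‖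
      ≤ ∑ p : Fin N × Fin J, ‖u p‖ * ‖v p‖ := by
        rw [hLHS]
        refine le_trans (norm_sum_le _ _)
          (Finset.sum_le_sum fun p _ => norm_inner_le_norm (𝕜 := ℂ) _ _)
    _ ≤ Real.sqrt (∑ p : Fin N × Fin J, ‖u p‖ ^ 2) *
          Real.sqrt (∑ p : Fin N × Fin J, ‖v p‖ ^ 2) := by
        have h1 := Finset.sum_mul_sq_le_sq_mul_sq Finset.univ (fun p => ‖u p‖) (fun p => ‖v p‖)
        have h2 : (0:ℝ) ≤ ∑ p : Fin N × Fin J, ‖u p‖ * ‖v p‖ :=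
          Finset.sum_nonneg fun p _ => mul_nonneg (norm_nonneg _) (norm_nonneg _)
        rw [← Real.sqrt_mul_self h2, ← Real.sqrt_mul (Finset.sum_nonneg fun p _ => sq_nonneg _)]
        exact Real.sqrt_le_sqrt (by nlinarith [h1])
    _ ≤ Real.sqrt (‖∑ j, ContinuousLinearMap.adjoint (w j) * w j‖ * ∑ n, ‖g n‖ ^ 2) *
          Real.sqrt (‖∑ n, ∑ j, z n j * ContinuousLinearMap.adjoint (z n j)‖ * ‖h‖ ^ 2) := by
        exact mul_le_mul (Real.sqrt_le_sqrt hA) (Real.sqrt_le_sqrt hB) (Real.sqrt_nonneg _) (Real.sqrt_nonneg _)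
    _ = Real.sqrt ‖∑ j, ContinuousLinearMap.adjoint (w j) * w j‖ *
          Real.sqrt (∑ n, ‖g n‖ ^ 2) *
          Real.sqrt ‖∑ n, ∑ j, z n j * ContinuousLinearMap.adjoint (z n j)‖ * ‖h‖ := by
        rw [Real.sqrt_mul (norm_nonneg _), Real.sqrt_mul (norm_nonneg _),
          Real.sqrt_sq (norm_nonneg h)]
        ring
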